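/- For all integers n ≥ k ≥ 1 and all positive reals x_1, …, x_n (indices understood modulo n), the Diananda sum satisfies k · Σ_{j=1}^n x_j/(x_{j+1} + x_{j+2} + … + x_{j+k}) ≥ n · k · (2^{1/k} − 1). -/

import Mathlib

open Finset

private lemma diananda_prod_shift_one (n : ℕ) (hn : 0 < n) (f : ℕ → ℝ)
    (hf : ∀ j, f (j + n) = f j) :
    ∏ j ∈ range n, f (j + 1) = ∏ j ∈ range n, f j := by
  have h1 : ∏ j ∈ range n, f (j + 1) = ∏ j ∈ Ico 1 (n + 1), f j := by
    rw [Finset.prod_Ico_eq_prod_range]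
    simp [add_comm]
  rw [h1, Finset.prod_Ico_succ_top (by omega : 1 ≤ n)]
  have h2 : ∏ j ∈ range n, f j = ∏ j ∈ Ico 0 n, f j := by rw [Finset.range_eq_Ico]
  rw [h2, Finset.prod_eq_prod_Ico_succ_bot (by omega : 0 < n)]
  have h3 : f n = f 0 := by simpa using hf 0
  rw [h3]
  ring

private lemma diananda_prod_shift (n : ℕ) (hn : 0 < n) (f : ℕ → ℝ)
    (hf : ∀ j, f (j + n) = f j) (k : ℕ) :
    ∏ j ∈ range n, f (j + k) = ∏ j ∈ range n, f j := by
  induction k with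
  | zero => simp
  | succ k ih =>
    have hper' : ∀ j, f (j + n + k) = f (j + k) := fun j => by
      rw [show j + n + k = (j + k) + n by ring, hf]
    calc ∏ j ∈ range n, f (j + (k + 1))
        = ∏ j ∈ range n, f ((j + 1) + k) := by
          refine Finset.prod_congr rfl fun j _ => ?_
          rw [show j + (k + 1) = (j + 1) + k by ring]
      _ = ∏ j ∈ range n, f (j + k) :=
          diananda_prod_shift_one n hn (fun j => f (j + k)) hper'
      _ = ∏ j ∈ range n, f j := ih

theorem diananda_lower_bound (n k : ℕ) (hk : 1 ≤ k) (hkn : k ≤ n)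
    (x : ℕ → ℝ) (hx : ∀ j, 0 < x j) (hper : ∀ j, x (j + n) = x j) :
    (k : ℝ) * ∑ j ∈ Finset.range n, x j / (∑ i ∈ Finset.range k, x (j + i + 1)) ≥
      (n : ℝ) * k * ((2 : ℝ) ^ ((1 : ℝ) / k) - 1) := by
  have hn : 0 < n := lt_of_lt_of_le hk hkn
  set W : ℕ → ℕ → ℝ := fun m j => ∑ i ∈ range m, x (j + i) with hWdef
  set Q : ℕ → ℝ := fun m => ∏ j ∈ range n, W m j with hQdef
  have hWpos : ∀ m j, 1 ≤ m → 0 < W m j := by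
    intro m j hm
    exact Finset.sum_pos (fun i _ => hx _) (by simp; omega)
  have hWnonneg : ∀ m j, 0 ≤ W m j :=
    fun m j => Finset.sum_nonneg fun i _ => (hx _).le
  have hWper : ∀ m j, W m (j + n) = W m j := by
    intro m j
    refine Finset.sum_congr rfl fun i _ => ?_
    rw [show j + n + i = (j + i) + n by ring, hper]
  have hWsucc : ∀ m j, W (m + 1) j = W m j + x (j + m) := by
    intro m j
    simpa using Finset.sum_range_succ (fun i => x (j + i)) m
  have hWsucc' : ∀ m j, W (m + 1) j = x j + W m (j + 1) := by
    intro m j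
    have := Finset.sum_range_succ' (fun i => x (j + i)) m
    simp only [add_zero] at this
    rw [hWdef]
    simp only [this]
    rw [add_comm]
    congr 1
    refine Finset.sum_congr rfl fun i _ => ?_
    rw [show j + (i + 1) = (j + 1) + i by ring]
  have hWadd : ∀ a b j, W (a + b) j = W a j + W b (j + a) := by
    intro a b j
    have := Finset.sum_range_add (fun i => x (j + i)) a b
    rw [hWdef]
    simp only [this]
    congr 1
    refine Finset.sum_congr rfl fun i _ => ?_
    rw [show j + (a + i) = (j + a) + i by ring]
  have hQpos : ∀ m, 1 ≤ m → 0 < Q m :=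
    fun m hm => Finset.prod_pos fun j _ => hWpos m j hm
  -- pointwise key inequality
  have key : ∀ m j, W (m + 2) j * W m (j + 1) ≤ W (m + 1) j * W (m + 1) (j + 1) := by
    intro m j
    have e1 : W (m + 2) j = W (m + 1) j + x (j + (m + 1)) := hWsucc (m + 1) j
    have e2 : W (m + 1) (j + 1) = W m (j + 1) + x ((j + 1) + m) := hWsucc m (j + 1)
    have e3 : W (m + 1) j = x j + W m (j + 1) := hWsucc' m j
    have e4 : x (j + (m + 1)) = x ((j + 1) + m) := by rw [show j + (m + 1) = (j + 1) + m by ring]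
    have hxj := hx j
    have hb := hx ((j + 1) + m)
    nlinarith [hWnonneg m (j + 1)]
  -- product form of the key inequality
  have Qstep : ∀ m, Q (m + 2) * Q m ≤ Q (m + 1) * Q (m + 1) := by
    intro m
    have hshift : ∀ m', (∏ j ∈ range n, W m' (j + 1)) = Q m' := fun m' =>
      diananda_prod_shift_one n hn (W m') (hWper m')
    calc Q (m + 2) * Q m
        = (∏ j ∈ range n, W (m + 2) j) * ∏ j ∈ range n, W m (j + 1) := by
          rw [hshift m]
      _ = ∏ j ∈ range n, (W (m + 2) j * W m (j + 1)) := by rw [Finset.prod_mul_distrib]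
      _ ≤ ∏ j ∈ range n, (W (m + 1) j * W (m + 1) (j + 1)) := by
          refine Finset.prod_le_prod (fun j _ => ?_) (fun j _ => key m j)
          exact mul_nonneg (hWnonneg _ _) (hWnonneg _ _)
      _ = (∏ j ∈ range n, W (m + 1) j) * ∏ j ∈ range n, W (m + 1) (j + 1) := by
          rw [Finset.prod_mul_distrib]
      _ = Q (m + 1) * Q (m + 1) := by rw [hshift (m + 1)]
  set q : ℕ → ℝ := fun m => Q (m + 1) / Q m with hqdef
  have hqpos : ∀ m, 1 ≤ m → 0 < q m := fun m hm =>
    div_pos (hQpos (m + 1) (by omega)) (hQpos m hm)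
  have qdec : ∀ m, 1 ≤ m → q (m + 1) ≤ q m := by
    intro m hm
    rw [hqdef]
    rw [div_le_div_iff₀ (hQpos (m + 1) (by omega)) (hQpos m hm)]
    have := Qstep m
    nlinarith [Qstep m]
  have qdec' : ∀ i, q (k + i) ≤ q k := by
    intro i
    induction i with
    | zero => simp
    | succ i ih => exact le_trans (qdec (k + i) (by omega)) ih
  have growth : ∀ i, Q (k + i) ≤ Q k * q k ^ i := by
    intro i
    induction i with
    | zero => simp
    | succ i ih =>
      have hQne : Q (k + i) ≠ 0 := (hQpos (k + i) (by omega)).ne'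
      have e : Q (k + (i + 1)) = q (k + i) * Q (k + i) := by
        rw [hqdef]
        simp only []
        rw [div_mul_cancel₀ _ hQne, show k + (i + 1) = k + i + 1 by ring]
      have h1 : q (k + i) * Q (k + i) ≤ q k * Q (k + i) := by
        exact mul_le_mul_of_nonneg_right (qdec' i) (hQpos (k + i) (by omega)).le
      have h2 : q k * Q (k + i) ≤ q k * (Q k * q k ^ i) :=
        mul_le_mul_of_nonneg_left ih (hqpos k hk).le
      calc Q (k + (i + 1)) = q (k + i) * Q (k + i) := e
        _ ≤ q k * (Q k * q k ^ i) := le_trans h1 h2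
        _ = Q k * q k ^ (i + 1) := by rw [pow_succ]; ring
  -- doubling: Q (k + k) ≥ 2 ^ n * Q k
  have doubling : (2 : ℝ) ^ n * Q k ≤ Q (k + k) := by
    have hsq : ((2 : ℝ) ^ n * Q k) ^ 2 ≤ Q (k + k) ^ 2 := by
      have hQkk : Q (k + k) ^ 2 = ∏ j ∈ range n, (W k j + W k (j + k)) ^ 2 := by
        rw [hQdef]
        simp only []
        rw [← Finset.prod_pow]
        refine Finset.prod_congr rfl fun j _ => ?_
        rw [hWadd k k j]
      have hpt : ∀ j ∈ range n, 4 * (W k j * W k (j + k)) ≤ (W k j + W k (j + k)) ^ 2 := by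
        intro j _
        nlinarith [sq_nonneg (W k j - W k (j + k))]
      have h4 : ∏ j ∈ range n, (4 * (W k j * W k (j + k)))
          ≤ ∏ j ∈ range n, (W k j + W k (j + k)) ^ 2 := by
        refine Finset.prod_le_prod (fun j _ => ?_) hpt
        exact mul_nonneg (by norm_num) (mul_nonneg (hWnonneg _ _) (hWnonneg _ _))
      have hprod4 : ∏ j ∈ range n, (4 * (W k j * W k (j + k)))
          = 4 ^ n * (Q k * Q k) := by
        rw [Finset.prod_mul_distrib, Finset.prod_const, Finset.prod_mul_distrib]
        rw [diananda_prod_shift n hn (W k) (hWper k) k, Finset.card_range]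
      calc ((2 : ℝ) ^ n * Q k) ^ 2 = 4 ^ n * (Q k * Q k) := by
            rw [show (4 : ℝ) = 2 ^ 2 by norm_num, ← pow_mul, mul_pow]
            ring_nf
        _ ≤ ∏ j ∈ range n, (W k j + W k (j + k)) ^ 2 := hprod4 ▸ h4
        _ = Q (k + k) ^ 2 := hQkk.symm
    have h1 : (0 : ℝ) ≤ 2 ^ n * Q k := mul_nonneg (by positivity) (hQpos k hk).le
    have h2 : (0 : ℝ) ≤ Q (k + k) := (hQpos (k + k) (by omega)).le
    exact (pow_le_pow_iff_left₀ h1 h2 (by norm_num)).mp hsq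
  -- main product bound: 2 ^ n ≤ q k ^ k
  have qk_pow : (2 : ℝ) ^ n ≤ q k ^ k := by
    have h1 : (2 : ℝ) ^ n * Q k ≤ Q k * q k ^ k := le_trans doubling (growth k)
    have hQk := hQpos k hk
    nlinarith
  -- define t and relate
  set t : ℕ → ℝ := fun j => W (k + 1) j / W k (j + 1) with htdef
  have htpos : ∀ j, 0 < t j := fun j =>
    div_pos (hWpos (k + 1) j (by omega)) (hWpos k (j + 1) hk)
  have hprodt : ∏ j ∈ range n, t j = q k := by
    rw [htdef, hqdef]
    simp only []
    rw [Finset.prod_div_distrib]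
    congr 1
    exact diananda_prod_shift_one n hn (W k) (hWper k)
  -- AM-GM
  have amgm : (q k) ^ ((1 : ℝ) / n) ≤ ∑ j ∈ range n, (1 / (n : ℝ)) * t j := by
    have := Real.geom_mean_le_arith_mean_weighted (range n) (fun _ => 1 / (n : ℝ)) t
      (fun i _ => by positivity) (by
        rw [Finset.sum_const, Finset.card_range, nsmul_eq_mul]
        field_simp) (fun i _ => (htpos i).le)
    rwa [Real.finset_prod_rpow (range n) t (fun i _ => (htpos i).le), hprodt] at this
  -- convert 2 ^ n ≤ q k ^ k into 2 ^ (1/k) ≤ q k ^ (1/n)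
  have hqk_rpow : (2 : ℝ) ^ ((1 : ℝ) / k) ≤ (q k) ^ ((1 : ℝ) / n) := by
    have hq := (hqpos k hk).le
    have h0 : ((2 : ℝ) ^ n) ^ ((1 : ℝ) / (n * k)) ≤ (q k ^ k) ^ ((1 : ℝ) / (n * k)) :=
      Real.rpow_le_rpow (by positivity) qk_pow (by positivity)
    have e1 : ((2 : ℝ) ^ n) ^ ((1 : ℝ) / (n * k)) = (2 : ℝ) ^ ((1 : ℝ) / k) := by
      rw [← Real.rpow_natCast 2 n, ← Real.rpow_mul (by norm_num)]
      congr 1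
      field_simp
    have e2 : ((q k) ^ k) ^ ((1 : ℝ) / (n * k)) = (q k) ^ ((1 : ℝ) / n) := by
      rw [← Real.rpow_natCast (q k) k, ← Real.rpow_mul hq]
      congr 1
      field_simp
    rw [e1, e2] at h0
    exact h0
  -- sum bound
  have sumt : (n : ℝ) * (2 : ℝ) ^ ((1 : ℝ) / k) ≤ ∑ j ∈ range n, t j := by
    have h1 : (n : ℝ) * (q k) ^ ((1 : ℝ) / n) ≤ ∑ j ∈ range n, t j := by
      have := amgm
      rw [← Finset.mul_sum] at this
      have hn' : (0 : ℝ) < n := by exact_mod_cast hn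
      calc (n : ℝ) * (q k) ^ ((1 : ℝ) / n) ≤ (n : ℝ) * ((1 / (n : ℝ)) * ∑ j ∈ range n, t j) :=
            mul_le_mul_of_nonneg_left this hn'.le
        _ = ∑ j ∈ range n, t j := by field_simp
    have hn' : (0 : ℝ) ≤ n := by positivity
    nlinarith [hqk_rpow]
  -- relate t to the original sum
  have hterm : ∀ j, t j = x j / (∑ i ∈ range k, x (j + i + 1)) + 1 := by
    intro j
    have hS : (∑ i ∈ range k, x (j + i + 1)) = W k (j + 1) := by
      refine Finset.sum_congr rfl fun i _ => ?_
      rw [show j + i + 1 = (j + 1) + i by ring]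
    rw [hS, htdef]
    simp only []
    rw [hWsucc' k j, add_div, div_self (hWpos k (j + 1) hk).ne']
  have hsum : ∑ j ∈ range n, x j / (∑ i ∈ range k, x (j + i + 1))
      = (∑ j ∈ range n, t j) - n := by
    have : ∑ j ∈ range n, t j
        = ∑ j ∈ range n, (x j / (∑ i ∈ range k, x (j + i + 1)) + 1) :=
      Finset.sum_congr rfl fun j _ => hterm j
    rw [this, Finset.sum_add_distrib, Finset.sum_const, Finset.card_range, nsmul_eq_mul]
    ring
  rw [ge_iff_le, hsum]
  have hk' : (0 : ℝ) ≤ k := by positivity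
  nlinarith [sumt]
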